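/- arXiv:1703.07983 — 6 statements merged into one kernel-verified Lean document; each statement's English description precedes it below -/
import Mathlib

section
/- For all x ∈ [0, 0.441], √((1/2)(1 − √(1 − x²))) ≤ x/2 + 4x², i.e., the exact distance formula is bounded by the estimate of Walters' theorem on the range where that estimate is nontrivial. -/
/-- For all x ∈ [0, 0.441], √((1/2)(1 − √(1 − x²))) ≤ x/2 + 4x². -/
theorem stmt4 (x : ℝ) (hx : x ∈ Set.Icc (0:ℝ) 0.441) :
    Real.sqrt (1/2 * (1 - Real.sqrt (1 - x^2))) ≤ x/2 + 4*x^2 := by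
  obtain ⟨hx0, hx1⟩ := hx
  have h1 : (0:ℝ) ≤ 1 - x^2 := by nlinarith
  set s := Real.sqrt (1 - x^2) with hs
  have hs2 : s^2 = 1 - x^2 := Real.sq_sqrt h1
  have hs0 : 0 ≤ s := Real.sqrt_nonneg _
  have ht0 : 0 ≤ x/2 + 4*x^2 := by nlinarith
  rw [show Real.sqrt (1/2 * (1 - s)) ≤ x/2 + 4*x^2 ↔
      0 ≤ x/2 + 4*x^2 ∧ 1/2 * (1 - s) ≤ (x/2 + 4*x^2)^2 from Real.sqrt_le_iff]
  refine ⟨ht0, ?_⟩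
  have key : 1 - 2*(x/2 + 4*x^2)^2 ≤ s := by
    rcases le_or_gt (1 - 2*(x/2 + 4*x^2)^2) 0 with h | h
    · linarith
    · nlinarith [sq_nonneg (s - (1 - 2*(x/2 + 4*x^2)^2)), sq_nonneg x, sq_nonneg (x*x),
        mul_nonneg (mul_nonneg hx0 hx0) hx0, mul_nonneg (mul_nonneg (mul_nonneg hx0 hx0) hx0) hx0]
  linarith
end

section
/- Let t ∈ (0,1), e = [[t, √(t(1−t))],[√(t(1−t)), 1−t]], u = diag(1,−1), and q₀ = (1/2)[[1,1],[1,1]]. Then q₀ is an orthogonal projection with q₀·u·q₀ = 0, and ‖e − q₀‖ = √((1/2)(1 − √(1 − (2t−1)²))). -/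
open scoped Matrix Matrix.Norms.L2Operator

/-- For t ∈ (0,1), q₀ = (1/2)[[1,1],[1,1]] is an orthogonal projection with
q₀·u·q₀ = 0 (u = diag(1,−1)), and ‖e − q₀‖ = √((1/2)(1 − √(1 − (2t−1)²))). -/
theorem stmt8 (t : ℝ) (ht : t ∈ Set.Ioo (0:ℝ) 1)
    (e u q₀ : Matrix (Fin 2) (Fin 2) ℂ)
    (he : e = !![(t:ℂ), (Real.sqrt (t*(1-t)) : ℂ);
                 (Real.sqrt (t*(1-t)) : ℂ), 1 - (t:ℂ)])
    (hu : u = !![1, 0; 0, -1])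
    (hq : q₀ = (1/2 : ℂ) • !![1, 1; 1, 1]) :
    q₀ᴴ = q₀ ∧ q₀ * q₀ = q₀ ∧ q₀ * u * q₀ = 0 ∧
    ‖e - q₀‖ = Real.sqrt (1/2 * (1 - Real.sqrt (1 - (2*t - 1)^2))) := by
  obtain ⟨ht0, ht1⟩ := ht
  have hprod : (0:ℝ) ≤ t*(1-t) := by nlinarith
  set s : ℝ := Real.sqrt (t*(1-t)) with hs
  have hs2 : s^2 = t*(1-t) := Real.sq_sqrt hprod
  have hs0 : 0 ≤ s := Real.sqrt_nonneg _
  clear_value s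
  have hsle : s ≤ 1/2 := by nlinarith [sq_nonneg (2*t-1)]
  refine ⟨?_, ?_, ?_, ?_⟩
  · subst hq; ext i j; fin_cases i <;> fin_cases j <;>
      simp [Matrix.conjTranspose_apply]
  · subst hq; ext i j; fin_cases i <;> fin_cases j <;>
      simp [Matrix.mul_apply, Fin.sum_univ_two] <;> ring
  · subst hq hu; ext i j; fin_cases i <;> fin_cases j <;>
      simp [Matrix.mul_apply, Fin.sum_univ_two] <;> ring
  · set A := e - q₀ with hA
    have hAH : Aᴴ = A := by
      subst he hq; ext i j; fin_cases i <;> fin_cases j <;>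
        simp [Matrix.conjTranspose_apply, hA] <;> ring_nf <;>
        simp [Complex.ext_iff]
    have hc : (0:ℝ) ≤ 1/2 - s := by linarith
    have hs2c : (s:ℂ)^2 = (t:ℂ)*(1-(t:ℂ)) := by
      exact_mod_cast congrArg Complex.ofReal hs2
    have hAA : A * A = ((1/2 - s : ℝ) : ℂ) • 1 := by
      subst he hq
      ext i j
      fin_cases i <;> fin_cases j <;>
        · simp [hA, Matrix.mul_apply, Fin.sum_univ_two, Matrix.one_apply]
          push_cast
          try ring
          try rw [hs2c]
          try ring
    have hnorm2 : ‖A‖ * ‖A‖ = 1/2 - s := by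
      rw [← Matrix.l2_opNorm_conjTranspose_mul_self A, hAH, hAA, norm_smul,
        norm_one, mul_one, Complex.norm_real, Real.norm_of_nonneg hc]
    have harg : 1/2 * (1 - Real.sqrt (1 - (2*t - 1)^2)) = 1/2 - s := by
      have h4 : (1:ℝ) - (2*t-1)^2 = (2*s)^2 := by rw [mul_pow]; nlinarith
      rw [h4, Real.sqrt_sq (by linarith)]; ring
    rw [harg, ← hnorm2, Real.sqrt_mul_self (norm_nonneg A)]
end

section
/- Let t ∈ (0,1), e = [[t, √(t(1−t))],[√(t(1−t)), 1−t]], u = diag(1,−1). For every 2×2 orthogonal projection q with quq = 0, we have ‖e − q‖ ≥ √((1/2)(1 − √(1 − (2t−1)²))). Hence the distance from e to the set {q : q = q* = q², quq = 0} equals √((1/2)(1 − √(1 − ‖eue‖²))). -/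
open scoped Matrix Matrix.Norms.L2Operator

lemma stmt9_normsq (M : Matrix (Fin 2) (Fin 2) ℂ) (c : ℝ) (hc : 0 ≤ c)
    (h : Mᴴ * M = (c:ℂ) • 1) : ‖M‖ = Real.sqrt c := by
  have h1 : ‖(1 : Matrix (Fin 2) (Fin 2) ℂ)‖ = 1 := by
    rw [Matrix.cstar_norm_def, map_one]; exact ContinuousLinearMap.norm_id
  have h2 : ‖M‖ * ‖M‖ = c := by
    rw [← Matrix.l2_opNorm_conjTranspose_mul_self, h, norm_smul, h1, mul_one,
      Complex.norm_real, Real.norm_eq_abs, abs_of_nonneg hc]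
  rw [← h2, Real.sqrt_mul_self (norm_nonneg M)]

lemma stmt9_keynorm (α : ℝ) (β : ℂ) :
    ‖!![(α:ℂ), β; (starRingEnd ℂ) β, -(α:ℂ)]‖ = Real.sqrt (α^2 + ‖β‖^2) := by
  apply stmt9_normsq _ _ (by positivity)
  have habs : (‖β‖ ^ 2 : ℝ) = β.re^2 + β.im^2 := by
    rw [Complex.sq_norm, Complex.normSq_apply]; ring
  rw [habs]
  ext i j
  fin_cases i <;> fin_cases j <;>
    simp [Matrix.mul_apply, Fin.sum_univ_two, Matrix.conjTranspose_apply, Matrix.one_apply,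
      Complex.ext_iff] <;> ring_nf <;> simp [← Complex.ofReal_pow] <;> ring_nf

set_option maxHeartbeats 1000000 in
/-- For t ∈ (0,1), e as below and u = diag(1,−1): every 2×2 orthogonal
projection q with quq = 0 satisfies ‖e − q‖ ≥ √((1/2)(1 − √(1 − (2t−1)²))), and the
distance from e to the set of such q equals √((1/2)(1 − √(1 − ‖eue‖²))). -/
theorem stmt9 (t : ℝ) (ht : t ∈ Set.Ioo (0:ℝ) 1)
    (e u : Matrix (Fin 2) (Fin 2) ℂ)
    (he : e = !![(t:ℂ), (Real.sqrt (t*(1-t)) : ℂ);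
                 (Real.sqrt (t*(1-t)) : ℂ), 1 - (t:ℂ)])
    (hu : u = !![1, 0; 0, -1]) :
    (∀ q : Matrix (Fin 2) (Fin 2) ℂ, qᴴ = q → q * q = q → q * u * q = 0 →
      ‖e - q‖ ≥ Real.sqrt (1/2 * (1 - Real.sqrt (1 - (2*t - 1)^2)))) ∧
    Metric.infDist e {q : Matrix (Fin 2) (Fin 2) ℂ | qᴴ = q ∧ q * q = q ∧ q * u * q = 0}
      = Real.sqrt (1/2 * (1 - Real.sqrt (1 - ‖e * u * e‖^2))) := by
  obtain ⟨ht0, ht1⟩ := ht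
  subst he hu
  set sc : ℝ := Real.sqrt (t*(1-t)) with hsc_def
  have htt : (0:ℝ) ≤ t*(1-t) := by nlinarith
  have hsc2 : sc^2 = t*(1-t) := Real.sq_sqrt htt
  have hsc0 : 0 ≤ sc := Real.sqrt_nonneg _
  have hsc_half : sc ≤ 1/2 := by
    have h1 : sc ≤ Real.sqrt ((1/2)^2) := Real.sqrt_le_sqrt (by nlinarith [sq_nonneg (2*t-1)])
    rwa [Real.sqrt_sq (by norm_num)] at h1
  set E : Matrix (Fin 2) (Fin 2) ℂ := !![(t:ℂ), (sc:ℂ); (sc:ℂ), 1 - (t:ℂ)] with hE_def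
  set U : Matrix (Fin 2) (Fin 2) ℂ := !![1, 0; 0, -1] with hU_def
  -- the target value
  have hs4 : Real.sqrt (1 - (2*t-1)^2) = 2*sc := by
    rw [show (1 - (2*t-1)^2) = (2*sc)^2 by nlinarith, Real.sqrt_sq (by linarith)]
  have htarg : Real.sqrt (1/2 * (1 - Real.sqrt (1 - (2*t-1)^2))) = Real.sqrt (1/2 - sc) := by
    rw [hs4]; congr 1; ring
  -- norm of E is 1
  have hEherm : Eᴴ = E := by
    ext i j; fin_cases i <;> fin_cases j <;>
      simp [hE_def, Matrix.conjTranspose_apply, Complex.ext_iff]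
  have hEidem : E * E = E := by
    ext i j
    fin_cases i <;> fin_cases j <;>
      simp [hE_def, Matrix.mul_apply, Fin.sum_univ_two, Complex.ext_iff] <;>
      nlinarith [hsc2]
  have hEnorm : ‖E‖ = 1 := by
    have h2 : ‖E‖ * ‖E‖ = ‖E‖ * 1 := by
      rw [← Matrix.l2_opNorm_conjTranspose_mul_self, hEherm, hEidem, mul_one]
    have hne : E ≠ 0 := by
      intro h
      have := congrFun (congrFun h 0) 0
      simp [hE_def, Complex.ext_iff] at this
      linarith
    have hnz : ‖E‖ ≠ 0 := by simpa using hne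
    exact mul_left_cancel₀ hnz h2
  -- the main bound
  have hbound : ∀ q : Matrix (Fin 2) (Fin 2) ℂ, qᴴ = q → q * q = q → q * U * q = 0 →
      Real.sqrt (1/2 - sc) ≤ ‖E - q‖ := by
    intro q hq1 hq2 hq3
    have hc : q 1 0 = (starRingEnd ℂ) (q 0 1) := by
      conv_lhs => rw [← hq1]
      simp [Matrix.conjTranspose_apply]
    have e00 := congrFun (congrFun hq3 0) 0
    have e01 := congrFun (congrFun hq3 0) 1
    have e11 := congrFun (congrFun hq3 1) 1
    have i00 := congrFun (congrFun hq2 0) 0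
    simp only [Matrix.mul_apply, Fin.sum_univ_two, hU_def, Matrix.cons_val', Matrix.cons_val_zero,
      Matrix.cons_val_one, Matrix.head_cons, Matrix.head_fin_const, Matrix.empty_val',
      Matrix.cons_val_fin_one, Matrix.zero_apply, Matrix.of_apply] at e00 e01 e11 i00
    rw [hc] at e00
    rw [hc] at e11
    rw [hc] at i00
    -- e00 : a² - b·conj b = 0 ;  e01 : b(a-d) = 0 ; e11 : conj b · b - d² = 0 (up to signs)
    by_cases hb : q 0 1 = 0
    · -- q = 0
      have ha : q 0 0 = 0 := by
        have h : q 0 0 * q 0 0 = 0 := by rw [hb] at e00; simpa using e00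
        exact mul_self_eq_zero.mp h
      have hd : q 1 1 = 0 := by
        rw [hb] at e11; simpa using e11
      have hq0 : q = 0 := by
        rw [Matrix.eta_fin_two q, ha, hb, hc, hb, hd]
        ext i j; fin_cases i <;> fin_cases j <;> simp
      rw [hq0, sub_zero, hEnorm]
      calc Real.sqrt (1/2 - sc) ≤ Real.sqrt 1 := Real.sqrt_le_sqrt (by linarith)
        _ = 1 := Real.sqrt_one
    · -- q = (1/2)[[1,ω],[ω̄,1]] with |ω| = 1/2·2
      have had : q 0 0 = q 1 1 := by
        have h01 : q 0 1 * (q 0 0 - q 1 1) = 0 := by linear_combination e01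
        rcases mul_eq_zero.mp h01 with h | h
        · exact absurd h hb
        · exact sub_eq_zero.mp h
      have hbb : q 0 0 * q 0 0 = q 0 1 * (starRingEnd ℂ) (q 0 1) := by
        linear_combination e00
      have h2a : q 0 0 * (2 * q 0 0 - 1) = 0 := by linear_combination e00 + i00
      have ha : q 0 0 = 1/2 := by
        rcases mul_eq_zero.mp h2a with h | h
        · exfalso
          have h0 : q 0 1 * (starRingEnd ℂ) (q 0 1) = 0 := by
            rw [h] at hbb; linear_combination -hbb
          rcases mul_eq_zero.mp h0 with h' | h'
          · exact hb h'
          · exact hb (by simpa using h')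
        · linear_combination h/2
      have hd : q 1 1 = 1/2 := had ▸ ha
      have habs : ‖q 0 1‖ = 1/2 := by
        have h1 : ((Complex.normSq (q 0 1) : ℝ) : ℂ) = ((1/4 : ℝ) : ℂ) := by
          rw [← Complex.mul_conj]
          rw [ha] at hbb
          push_cast
          linear_combination -hbb
        have h2 : Complex.normSq (q 0 1) = 1/4 := by exact_mod_cast h1
        rw [Complex.norm_def, h2]
        rw [show (1/4:ℝ) = (1/2)^2 by norm_num, Real.sqrt_sq (by norm_num)]
      -- write E - q in the canonical form
      have hM : E - q = !![((t - 1/2 : ℝ):ℂ), (sc:ℂ) - q 0 1;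
          (starRingEnd ℂ) ((sc:ℂ) - q 0 1), -((t - 1/2 : ℝ):ℂ)] := by
        ext i j
        fin_cases i <;> fin_cases j <;>
          simp [hE_def, Matrix.sub_apply, hc, ha, hd, map_sub, Complex.conj_ofReal] <;>
          push_cast <;> ring
      rw [hM, stmt9_keynorm]
      apply Real.sqrt_le_sqrt
      have hge : 1/2 - sc ≤ ‖(sc:ℂ) - q 0 1‖ := by
        have h1 := abs_norm_sub_norm_le ((sc:ℂ)) (q 0 1)
        calc 1/2 - sc ≤ |sc - 1/2| := by rw [abs_sub_comm]; exact le_abs_self _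
          _ ≤ _ := by
            simpa [Complex.norm_real, Real.norm_eq_abs, abs_of_nonneg hsc0, habs] using h1
      nlinarith [hge, hsc2, hsc_half,
        mul_self_le_mul_self (by linarith : (0:ℝ) ≤ 1/2 - sc) hge]
  -- compute ‖E * U * E‖
  have hEUE : E * U * E = ((2*t - 1 : ℝ):ℂ) • E := by
    ext i j
    fin_cases i <;> fin_cases j <;>
      simp [hE_def, hU_def, Matrix.mul_apply, Fin.sum_univ_two, Matrix.smul_apply,
        smul_eq_mul, Complex.ext_iff] <;>
      nlinarith [hsc2]
  have hEUEnorm : ‖E * U * E‖^2 = (2*t - 1)^2 := by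
    rw [hEUE, norm_smul, hEnorm, mul_one, Complex.norm_real, Real.norm_eq_abs, sq_abs]
  -- the witness
  set Q : Matrix (Fin 2) (Fin 2) ℂ := !![(1/2:ℂ), 1/2; 1/2, 1/2] with hQ_def
  have hQmem : Q ∈ {q : Matrix (Fin 2) (Fin 2) ℂ | qᴴ = q ∧ q * q = q ∧ q * U * q = 0} := by
    refine ⟨?_, ?_, ?_⟩ <;>
      · ext i j
        fin_cases i <;> fin_cases j <;>
          simp [hQ_def, hU_def, Matrix.mul_apply, Fin.sum_univ_two,
            Matrix.conjTranspose_apply, Complex.ext_iff] <;> norm_num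
  have hQdist : ‖E - Q‖ = Real.sqrt (1/2 - sc) := by
    have hM : E - Q = !![((t - 1/2 : ℝ):ℂ), ((sc - 1/2 : ℝ):ℂ);
        (starRingEnd ℂ) ((sc - 1/2 : ℝ):ℂ), -((t - 1/2 : ℝ):ℂ)] := by
      ext i j
      fin_cases i <;> fin_cases j <;>
        simp [hE_def, hQ_def, Matrix.sub_apply, Complex.conj_ofReal, Complex.ext_iff] <;>
        push_cast <;> ring_nf
    rw [hM, stmt9_keynorm]
    congr 1
    rw [Complex.norm_real, Real.norm_eq_abs, sq_abs]
    nlinarith [hsc2]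
  have hmem0 : (0 : Matrix (Fin 2) (Fin 2) ℂ) ∈
      {q : Matrix (Fin 2) (Fin 2) ℂ | qᴴ = q ∧ q * q = q ∧ q * U * q = 0} := by
    refine ⟨by simp, by simp, by simp⟩
  constructor
  · intro q hq1 hq2 hq3
    rw [ge_iff_le, htarg]
    exact hbound q hq1 hq2 hq3
  · rw [hEUEnorm, htarg]
    apply le_antisymm
    · calc Metric.infDist E _ ≤ dist E Q := Metric.infDist_le_dist_of_mem hQmem
        _ = Real.sqrt (1/2 - sc) := by rw [dist_eq_norm, hQdist]
    · by_contra hlt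
      push_neg at hlt
      obtain ⟨y, hy, hdy⟩ := (Metric.infDist_lt_iff ⟨0, hmem0⟩).mp hlt
      have hb := hbound y hy.1 hy.2.1 hy.2.2
      rw [dist_eq_norm] at hdy
      linarith
end

section
/- In ℂ³, let u = diag(1,1,−1), e = diag(1,0,0), and for x,y ∈ ℂ with |x|²+|y|² = 1 let q_{x,y} be as above. Then ‖e − q_{x,y}‖ = √((1 + |y|²)/2). -/
set_option maxHeartbeats 1000000
set_option maxRecDepth 8000

open scoped Matrix Matrix.Norms.L2Operator

/-- In ℂ³ with e = diag(1,0,0) and q_{x,y} as in the paper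
(|x|² + |y|² = 1), one has ‖e − q_{x,y}‖ = √((1 + |y|²)/2). -/
theorem stmt13 (x y : ℂ) (hxy : ‖x‖^2 + ‖y‖^2 = 1)
    (e q : Matrix (Fin 3) (Fin 3) ℂ)
    (he : e = Matrix.diagonal ![1, 0, 0])
    (hq : q = (1/2 : ℂ) • !![x * star x, x * star y, x;
                             star x * y, y * star y, y;
                             star x, star y, 1]) :
    ‖e - q‖ = Real.sqrt ((1 + ‖y‖^2) / 2) := by
  have hyc : y * (starRingEnd ℂ) y = ((‖y‖^2 : ℝ) : ℂ) := by
    push_cast; exact Complex.mul_conj' y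
  have h1 : x * (starRingEnd ℂ) x + y * (starRingEnd ℂ) y = 1 := by
    rw [show x * (starRingEnd ℂ) x = ((‖x‖^2 : ℝ) : ℂ) by push_cast; exact Complex.mul_conj' x,
      hyc, ← Complex.ofReal_add, hxy, Complex.ofReal_one]
  set c : ℝ := (1 + ‖y‖^2) / 2 with hc
  have hc0 : 0 ≤ c := by positivity
  have hcC : ((1 + y * star y) / 2 : ℂ) = ((c : ℝ) : ℂ) := by
    rw [show (star y : ℂ) = (starRingEnd ℂ) y from rfl, hyc]; norm_cast
  set A : Matrix (Fin 3) (Fin 3) ℂ := e - q with hA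
  have hAexp : A = !![1 - x * star x/2, -(x * star y)/2, -(x/2);
      -(star x * y)/2, -(y * star y)/2, -(y/2);
      -((starRingEnd ℂ) x)/2, -((starRingEnd ℂ) y)/2, -(1/2)] := by
    rw [hA, he, hq]
    ext i j
    fin_cases i <;> fin_cases j <;>
      simp [Matrix.diagonal] <;> ring
  -- key matrix identity: A⁴ = c • A²
  have key : A * A * (A * A) = ((1 + y * star y) / 2 : ℂ) • (A * A) := by
    rw [hAexp]
    ext i j
    fin_cases i <;> fin_cases j <;>
      simp [Matrix.mul_apply, Fin.sum_univ_three, Matrix.smul_apply, smul_eq_mul]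
    · linear_combination ((-1/2) + (9/16) * x * ((starRingEnd ℂ) x) + (-1/8) * x * ((starRingEnd ℂ) x) * y * ((starRingEnd ℂ) y) + (1/16) * x * ((starRingEnd ℂ) x) * y^2 * ((starRingEnd ℂ) y)^2 + (-1/4) * x^2 * ((starRingEnd ℂ) x)^2 + (1/8) * x^2 * ((starRingEnd ℂ) x)^2 * y * ((starRingEnd ℂ) y) + (1/16) * x^3 * ((starRingEnd ℂ) x)^3) * h1
    · linear_combination ((3/16) * x * ((starRingEnd ℂ) y) + (1/16) * x * y^2 * ((starRingEnd ℂ) y)^3 + (-1/8) * x^2 * ((starRingEnd ℂ) x) * ((starRingEnd ℂ) y) + (1/8) * x^2 * ((starRingEnd ℂ) x) * y * ((starRingEnd ℂ) y)^2 + (1/16) * x^3 * ((starRingEnd ℂ) x)^2 * ((starRingEnd ℂ) y)) * h1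
    · linear_combination ((3/16) * x + (1/16) * x * y^2 * ((starRingEnd ℂ) y)^2 + (-1/8) * x^2 * ((starRingEnd ℂ) x) + (1/8) * x^2 * ((starRingEnd ℂ) x) * y * ((starRingEnd ℂ) y) + (1/16) * x^3 * ((starRingEnd ℂ) x)^2) * h1
    · linear_combination ((3/16) * ((starRingEnd ℂ) x) * y + (1/16) * ((starRingEnd ℂ) x) * y^3 * ((starRingEnd ℂ) y)^2 + (-1/8) * x * ((starRingEnd ℂ) x)^2 * y + (1/8) * x * ((starRingEnd ℂ) x)^2 * y^2 * ((starRingEnd ℂ) y) + (1/16) * x^2 * ((starRingEnd ℂ) x)^3 * y) * h1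
    · linear_combination ((1/16) * y * ((starRingEnd ℂ) y) + (1/8) * y^2 * ((starRingEnd ℂ) y)^2 + (1/16) * y^3 * ((starRingEnd ℂ) y)^3 + (1/8) * x * ((starRingEnd ℂ) x) * y^2 * ((starRingEnd ℂ) y)^2 + (1/16) * x^2 * ((starRingEnd ℂ) x)^2 * y * ((starRingEnd ℂ) y)) * h1
    · linear_combination ((1/16) * y + (1/8) * y^2 * ((starRingEnd ℂ) y) + (1/16) * y^3 * ((starRingEnd ℂ) y)^2 + (1/8) * x * ((starRingEnd ℂ) x) * y^2 * ((starRingEnd ℂ) y) + (1/16) * x^2 * ((starRingEnd ℂ) x)^2 * y) * h1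
    · linear_combination ((3/16) * ((starRingEnd ℂ) x) + (1/16) * ((starRingEnd ℂ) x) * y^2 * ((starRingEnd ℂ) y)^2 + (-1/8) * x * ((starRingEnd ℂ) x)^2 + (1/8) * x * ((starRingEnd ℂ) x)^2 * y * ((starRingEnd ℂ) y) + (1/16) * x^2 * ((starRingEnd ℂ) x)^3) * h1
    · linear_combination ((1/16) * ((starRingEnd ℂ) y) + (1/8) * y * ((starRingEnd ℂ) y)^2 + (1/16) * y^2 * ((starRingEnd ℂ) y)^3 + (1/8) * x * ((starRingEnd ℂ) x) * y * ((starRingEnd ℂ) y)^2 + (1/16) * x^2 * ((starRingEnd ℂ) x)^2 * ((starRingEnd ℂ) y)) * h1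
    · linear_combination ((1/16) + (1/8) * y * ((starRingEnd ℂ) y) + (1/16) * y^2 * ((starRingEnd ℂ) y)^2 + (1/8) * x * ((starRingEnd ℂ) x) * y * ((starRingEnd ℂ) y) + (1/16) * x^2 * ((starRingEnd ℂ) x)^2) * h1
  -- A is self-adjoint
  have hAH : Aᴴ = A := by
    rw [hAexp]
    ext i j
    fin_cases i <;> fin_cases j <;>
      simp [Matrix.conjTranspose_apply, mul_comm] <;> ring
  have hA2H : (A * A)ᴴ = A * A := by
    rw [Matrix.conjTranspose_mul, hAH]
  -- A ≠ 0
  have hAne : A ≠ 0 := by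
    intro h0
    have h22 := congrFun (congrFun h0 2) 2
    rw [hAexp] at h22
    simp at h22
  have hN0 : ‖A‖ ≠ 0 := norm_ne_zero_iff.mpr hAne
  -- norm computations
  have n1 : ‖A * A‖ = ‖A‖ * ‖A‖ := by
    conv_lhs => rw [show A * A = Aᴴ * A by rw [hAH]]
    exact Matrix.l2_opNorm_conjTranspose_mul_self A
  have n2 : ‖A * A * (A * A)‖ = ‖A * A‖ * ‖A * A‖ := by
    conv_lhs => rw [show A * A * (A * A) = (A * A)ᴴ * (A * A) by rw [hA2H]]
    exact Matrix.l2_opNorm_conjTranspose_mul_self (A * A)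
  have n3 : ‖A * A * (A * A)‖ = c * ‖A * A‖ := by
    rw [key, hcC, norm_smul]
    simp [abs_of_nonneg hc0]
  have hN2 : ‖A‖ * ‖A‖ = c := by
    have h4 : (‖A‖ * ‖A‖) * (‖A‖ * ‖A‖) = c * (‖A‖ * ‖A‖) := by
      rw [← n1, ← n2, n3, n1]
    exact mul_right_cancel₀ (mul_ne_zero hN0 hN0) h4
  rw [show ‖e - q‖ = ‖A‖ from rfl, ← hN2,
    Real.sqrt_mul_self (norm_nonneg A)]
end

section
/- In ℂ³ with u = diag(1,1,−1) and e = diag(1,0,0), the distance from e to the set of orthogonal projections q satisfying quq = 0 equals 1/√2, and it is attained exactly at the projections (1/2)[[1,0,ω],[0,0,0],[conj(ω),0,1]] with |ω| = 1. -/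
open scoped Matrix Matrix.Norms.L2Operator
open Matrix

namespace Stmt14Aux

noncomputable def qmat (ω : ℂ) : Matrix (Fin 3) (Fin 3) ℂ :=
  (1/2 : ℂ) • !![1, 0, ω; 0, 0, 0; star ω, 0, 1]

lemma omega_ne (ω : ℂ) (hω : ‖ω‖ = 1) : ω ≠ 0 := by
  intro h; rw [h] at hω; simp at hω

lemma omega_mul (ω : ℂ) (hω : ‖ω‖ = 1) : ω * (starRingEnd ℂ) ω = 1 := by
  rw [Complex.mul_conj, Complex.normSq_eq_norm_sq, hω]; norm_num

lemma omega_star_inv (ω : ℂ) (hω : ‖ω‖ = 1) : star ω = ω⁻¹ :=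
  eq_inv_of_mul_eq_one_right (by rw [Complex.star_def]; exact omega_mul ω hω)

lemma starz (z : ℂ) : (starRingEnd ℂ) z * z = ((‖z‖ ^ 2 : ℝ) : ℂ) := by
  rw [mul_comm, Complex.mul_conj, Complex.normSq_eq_norm_sq]

lemma qmat_eq' (ω : ℂ) (hω : ‖ω‖ = 1) :
    qmat ω = !![(1:ℂ)/2, 0, ω/2; 0, 0, 0; ω⁻¹/2, 0, 1/2] := by
  rw [qmat, omega_star_inv ω hω]
  ext i j
  fin_cases i <;> fin_cases j <;> simp [Matrix.vecHead, Matrix.vecTail] <;> ring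

lemma udiag_eq : Matrix.diagonal ![1, 1, -1] = !![(1:ℂ), 0, 0; 0, 1, 0; 0, 0, -1] := by
  ext i j
  fin_cases i <;> fin_cases j <;> simp [Matrix.diagonal, Matrix.vecHead, Matrix.vecTail]

lemma ediag_eq : Matrix.diagonal ![1, 0, 0] = !![(1:ℂ), 0, 0; 0, 0, 0; 0, 0, 0] := by
  ext i j
  fin_cases i <;> fin_cases j <;> simp [Matrix.diagonal, Matrix.vecHead, Matrix.vecTail]

lemma pdiag_eq : Matrix.diagonal ![1, 0, 1] = !![(1:ℂ), 0, 0; 0, 0, 0; 0, 0, 1] := by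
  ext i j
  fin_cases i <;> fin_cases j <;> simp [Matrix.diagonal, Matrix.vecHead, Matrix.vecTail]

lemma qmat_herm (ω : ℂ) : (qmat ω)ᴴ = qmat ω := by
  rw [qmat]
  ext i j
  fin_cases i <;> fin_cases j <;>
    simp [Matrix.conjTranspose_apply, Matrix.vecHead, Matrix.vecTail]

lemma qmat_idem (ω : ℂ) (hω : ‖ω‖ = 1) : qmat ω * qmat ω = qmat ω := by
  have h0 := omega_ne ω hω
  rw [qmat_eq' ω hω, Matrix.mul_fin_three]
  ext i j
  fin_cases i <;> fin_cases j <;>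
    simp [Matrix.vecHead, Matrix.vecTail] <;> field_simp <;> ring

lemma qmat_quq (ω : ℂ) (hω : ‖ω‖ = 1) :
    qmat ω * Matrix.diagonal ![1, 1, -1] * qmat ω = 0 := by
  have h0 := omega_ne ω hω
  rw [qmat_eq' ω hω, udiag_eq, Matrix.mul_fin_three, Matrix.mul_fin_three]
  ext i j
  fin_cases i <;> fin_cases j <;>
    simp [Matrix.vecHead, Matrix.vecTail] <;> field_simp <;> ring

lemma norm_proj_eq_one {n : Type*} [Fintype n] [DecidableEq n]
    (p : Matrix n n ℂ) (h1 : pᴴ = p) (h2 : p * p = p) (h0 : p ≠ 0) : ‖p‖ = 1 := by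
  have h := Matrix.l2_opNorm_conjTranspose_mul_self p
  rw [h1, h2] at h
  have hp : ‖p‖ ≠ 0 := norm_ne_zero_iff.mpr h0
  have h2' : ‖p‖ * 1 = ‖p‖ * ‖p‖ := by rw [mul_one]; exact h
  exact (mul_left_cancel₀ hp h2').symm

lemma e_herm : (Matrix.diagonal ![1, 0, 0] : Matrix (Fin 3) (Fin 3) ℂ)ᴴ =
    Matrix.diagonal ![1, 0, 0] := by
  rw [ediag_eq]
  ext i j
  fin_cases i <;> fin_cases j <;>
    simp [Matrix.conjTranspose_apply, Matrix.vecHead, Matrix.vecTail]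

lemma e_idem : (Matrix.diagonal ![1, 0, 0] : Matrix (Fin 3) (Fin 3) ℂ) *
    Matrix.diagonal ![1, 0, 0] = Matrix.diagonal ![1, 0, 0] := by
  rw [ediag_eq, Matrix.mul_fin_three]
  ext i j
  fin_cases i <;> fin_cases j <;> simp [Matrix.vecHead, Matrix.vecTail]

lemma e_ne_zero : (Matrix.diagonal ![1, 0, 0] : Matrix (Fin 3) (Fin 3) ℂ) ≠ 0 := by
  intro h
  have := congrFun (congrFun h 0) 0
  simp [Matrix.diagonal] at this

lemma p_herm : (Matrix.diagonal ![1, 0, 1] : Matrix (Fin 3) (Fin 3) ℂ)ᴴ =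
    Matrix.diagonal ![1, 0, 1] := by
  rw [pdiag_eq]
  ext i j
  fin_cases i <;> fin_cases j <;>
    simp [Matrix.conjTranspose_apply, Matrix.vecHead, Matrix.vecTail]

lemma p_idem : (Matrix.diagonal ![1, 0, 1] : Matrix (Fin 3) (Fin 3) ℂ) *
    Matrix.diagonal ![1, 0, 1] = Matrix.diagonal ![1, 0, 1] := by
  rw [pdiag_eq, Matrix.mul_fin_three]
  ext i j
  fin_cases i <;> fin_cases j <;> simp [Matrix.vecHead, Matrix.vecTail]

lemma p_ne_zero : (Matrix.diagonal ![1, 0, 1] : Matrix (Fin 3) (Fin 3) ℂ) ≠ 0 := by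
  intro h
  have := congrFun (congrFun h 0) 0
  simp [Matrix.diagonal] at this

lemma sqrt_half : Real.sqrt (1/2) = 1 / Real.sqrt 2 := by
  rw [one_div, one_div, ← Real.sqrt_inv]

lemma one_lt_sqrt_two : 1 < Real.sqrt 2 := by
  nlinarith [Real.sq_sqrt (by norm_num : (0:ℝ) ≤ 2), Real.sqrt_nonneg 2]

lemma qmat_dist (ω : ℂ) (hω : ‖ω‖ = 1) :
    ‖(Matrix.diagonal ![1, 0, 0] : Matrix (Fin 3) (Fin 3) ℂ) - qmat ω‖ = 1 / Real.sqrt 2 := by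
  have h0 := omega_ne ω hω
  set d : Matrix (Fin 3) (Fin 3) ℂ := Matrix.diagonal ![1, 0, 0] - qmat ω with hd
  have hdh : dᴴ = d := by rw [hd, Matrix.conjTranspose_sub, e_herm, qmat_herm]
  have hdd : d * d = (1/2 : ℂ) • Matrix.diagonal ![1, 0, 1] := by
    rw [hd, ediag_eq, qmat_eq' ω hω, pdiag_eq]
    have hsub : !![(1:ℂ), 0, 0; 0, 0, 0; 0, 0, 0] - !![(1:ℂ)/2, 0, ω/2; 0, 0, 0; ω⁻¹/2, 0, 1/2]
        = !![(1:ℂ)/2, 0, -ω/2; 0, 0, 0; -ω⁻¹/2, 0, -(1/2)] := by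
      ext i j
      fin_cases i <;> fin_cases j <;> simp [Matrix.vecHead, Matrix.vecTail] <;> ring
    rw [hsub, Matrix.mul_fin_three]
    ext i j
    fin_cases i <;> fin_cases j <;>
      simp [Matrix.vecHead, Matrix.vecTail] <;> field_simp <;> ring
  have hC := Matrix.l2_opNorm_conjTranspose_mul_self d
  rw [hdh, hdd] at hC
  have hP : ‖(Matrix.diagonal ![1, 0, 1] : Matrix (Fin 3) (Fin 3) ℂ)‖ = 1 :=
    norm_proj_eq_one _ p_herm p_idem p_ne_zero
  rw [norm_smul, hP, mul_one] at hC
  have hhalf : ‖(1/2 : ℂ)‖ = 1/2 := by norm_num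
  rw [hhalf] at hC
  have : ‖d‖ = Real.sqrt (1/2) := by
    rw [← Real.sqrt_mul_self (norm_nonneg d), ← hC]
  rw [this, sqrt_half]

lemma diag_eq (q : Matrix (Fin 3) (Fin 3) ℂ) (h1 : qᴴ = q) (h2 : q * q = q) (j : Fin 3) :
    q j j = ((∑ i, ‖q i j‖ ^ 2 : ℝ) : ℂ) := by
  conv_lhs => rw [← h2, Matrix.mul_apply]
  have hjk : ∀ k, q j k = star (q k j) := fun k => by
    rw [← congrFun (congrFun h1 j) k, Matrix.conjTranspose_apply]
  push_cast
  refine Finset.sum_congr rfl (fun k _ => ?_)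
  rw [hjk k, Complex.star_def, starz, Complex.ofReal_pow]

lemma col_zero (q : Matrix (Fin 3) (Fin 3) ℂ) (h1 : qᴴ = q) (h2 : q * q = q) (j : Fin 3)
    (hj : q j j = 0) : ∀ i, q i j = 0 := by
  intro i
  have hs := diag_eq q h1 h2 j
  rw [hj] at hs
  have hsum : (∑ i, ‖q i j‖ ^ 2 : ℝ) = 0 := by exact_mod_cast hs.symm
  have := (Finset.sum_eq_zero_iff_of_nonneg
    (fun (i : Fin 3) _ => sq_nonneg ‖q i j‖)).mp hsum i (Finset.mem_univ i)
  exact norm_eq_zero.mp (pow_eq_zero_iff (by norm_num) |>.mp this)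

lemma exists_diag_ne (q : Matrix (Fin 3) (Fin 3) ℂ) (h1 : qᴴ = q) (h2 : q * q = q)
    (hq : q ≠ 0) : ∃ j, q j j ≠ 0 := by
  by_contra h
  push_neg at h
  apply hq
  ext i j
  exact col_zero q h1 h2 j (h j) i

lemma sqrt_sum_le_opNorm (A : Matrix (Fin 3) (Fin 3) ℂ) (v : Fin 3 → ℂ)
    (hv : ∑ i, ‖v i‖ ^ 2 = 1) :
    Real.sqrt (∑ i, ‖(A *ᵥ v) i‖ ^ 2) ≤ ‖A‖ := by
  have h := Matrix.l2_opNorm_mulVec A ((EuclideanSpace.equiv (Fin 3) ℂ).symm v)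
  rw [EuclideanSpace.norm_eq, EuclideanSpace.norm_eq] at h
  simp only [PiLp.continuousLinearEquiv_symm_apply] at h
  rw [hv, Real.sqrt_one, mul_one] at h
  convert h using 4

lemma column_bound (u e q : Matrix (Fin 3) (Fin 3) ℂ)
    (hu : u = Matrix.diagonal ![1, 1, -1]) (he : e = Matrix.diagonal ![1, 0, 0])
    (h1 : qᴴ = q) (h2 : q * q = q) (h3 : q * u * q = 0)
    (j : Fin 3) (hjj : q j j ≠ 0) :
    1 / Real.sqrt 2 ≤ ‖e - q‖ ∧
      (‖e - q‖ ≤ 1 / Real.sqrt 2 →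
        q 1 j = 0 ∧ ‖q 0 j‖ ^ 2 = (q j j).re / 2 ∧ ‖q 2 j‖ ^ 2 = (q j j).re / 2) := by
  set s : ℝ := ∑ i, ‖q i j‖ ^ 2 with hs
  have hdiag : q j j = (s : ℂ) := diag_eq q h1 h2 j
  have hs0 : 0 < s := by
    rcases lt_or_eq_of_le (Finset.sum_nonneg fun (i : Fin 3) _ => sq_nonneg ‖q i j‖) with h | h
    · exact h
    · exfalso; apply hjj; rw [hdiag]; norm_cast; rw [hs, ← h]
  set r : ℝ := Real.sqrt s with hrdef
  have hr : 0 < r := Real.sqrt_pos.mpr hs0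
  have hr2 : r ^ 2 = s := Real.sq_sqrt hs0.le
  set ξ : Fin 3 → ℂ := fun i => (r⁻¹ : ℝ) * q i j with hξ
  have hqij : ∀ i, q i j = (r : ℂ) * ξ i := by
    intro i
    show q i j = (r : ℂ) * ((r⁻¹ : ℝ) * q i j)
    push_cast
    rw [← mul_assoc, mul_inv_cancel₀ (by exact_mod_cast hr.ne'), one_mul]
  have hcol : (q *ᵥ fun i => q i j) = fun i => q i j := by
    funext i
    show ∑ k, q i k * q k j = q i j
    rw [← Matrix.mul_apply, h2]
  have hξfix : q *ᵥ ξ = ξ := by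
    have hsm : ξ = ((r⁻¹ : ℝ) : ℂ) • fun i => q i j := by funext i; simp [hξ]
    rw [hsm, Matrix.mulVec_smul, hcol]
  have hnormsum : ∀ i, ‖ξ i‖ ^ 2 = r⁻¹ ^ 2 * ‖q i j‖ ^ 2 := by
    intro i
    show ‖((r⁻¹ : ℝ) : ℂ) * q i j‖ ^ 2 = _
    rw [norm_mul, mul_pow, Complex.norm_real, Real.norm_eq_abs,
      abs_of_pos (inv_pos.mpr hr)]
  have hnorm : ∑ i, ‖ξ i‖ ^ 2 = 1 := by
    simp only [hnormsum]
    rw [← Finset.mul_sum, ← hs, inv_pow, hr2, inv_mul_cancel₀ hs0.ne']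
  have hvw : star ξ ᵥ* q = star ξ := by
    rw [← h1, ← Matrix.star_mulVec, hξfix]
  have hconstr : star ξ ⬝ᵥ (u *ᵥ ξ) = 0 := by
    have e1 : (q * u * q) *ᵥ ξ = q *ᵥ (u *ᵥ ξ) := by
      rw [← Matrix.mulVec_mulVec, hξfix, Matrix.mulVec_mulVec]
    calc star ξ ⬝ᵥ (u *ᵥ ξ) = (star ξ ᵥ* q) ⬝ᵥ (u *ᵥ ξ) := by rw [hvw]
      _ = star ξ ⬝ᵥ (q *ᵥ (u *ᵥ ξ)) := (Matrix.dotProduct_mulVec _ _ _).symm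
      _ = star ξ ⬝ᵥ ((q * u * q) *ᵥ ξ) := by rw [e1]
      _ = 0 := by rw [h3]; simp
  have hre : ((‖ξ 0‖ ^ 2 + ‖ξ 1‖ ^ 2 - ‖ξ 2‖ ^ 2 : ℝ) : ℂ) = 0 := by
    rw [← hconstr, hu]
    simp only [dotProduct, Matrix.mulVec_diagonal, Fin.sum_univ_three,
      Pi.star_apply, Complex.star_def, Matrix.cons_val_zero, Matrix.cons_val_one,
      Matrix.head_cons, Matrix.cons_val_two, Matrix.tail_cons, one_mul, neg_one_mul,
      mul_neg]
    rw [starz, starz, starz]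
    push_cast; ring
  have hre' : ‖ξ 0‖ ^ 2 + ‖ξ 1‖ ^ 2 = ‖ξ 2‖ ^ 2 := by
    have := Complex.ofReal_eq_zero.mp hre
    linarith
  have hsum3 : ‖ξ 0‖ ^ 2 + ‖ξ 1‖ ^ 2 + ‖ξ 2‖ ^ 2 = 1 := by
    rw [← Fin.sum_univ_three (fun i => ‖ξ i‖ ^ 2)]; exact hnorm
  have hξ2 : ‖ξ 2‖ ^ 2 = 1 / 2 := by linarith
  have hsub : (e - q) *ᵥ ξ = ![0, -ξ 1, -ξ 2] := by
    rw [Matrix.sub_mulVec, hξfix, he]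
    funext i
    fin_cases i <;>
      simp [Matrix.mulVec_diagonal]
  have hsumb : ∑ i, ‖((e - q) *ᵥ ξ) i‖ ^ 2 = ‖ξ 1‖ ^ 2 + 1 / 2 := by
    rw [hsub, Fin.sum_univ_three]
    simp only [Matrix.cons_val_zero, Matrix.cons_val_one, Matrix.head_cons,
      Matrix.cons_val_two, Matrix.tail_cons, norm_neg, norm_zero]
    rw [hξ2]; norm_num
  have hb : Real.sqrt (‖ξ 1‖ ^ 2 + 1 / 2) ≤ ‖e - q‖ := by
    rw [← hsumb]; exact sqrt_sum_le_opNorm _ ξ hnorm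
  have h2eq : (1 : ℝ) / Real.sqrt 2 = Real.sqrt (1 / 2) := sqrt_half.symm
  constructor
  · rw [h2eq]
    exact le_trans (Real.sqrt_le_sqrt (by nlinarith [sq_nonneg ‖ξ 1‖])) hb
  · intro hle
    have hle2 : ‖ξ 1‖ ^ 2 + 1 / 2 ≤ 1 / 2 := by
      by_contra hc
      push_neg at hc
      have := Real.sqrt_lt_sqrt (by norm_num) hc
      rw [← h2eq] at this
      linarith
    have hξ1 : ξ 1 = 0 := by
      have : ‖ξ 1‖ ^ 2 = 0 := by nlinarith [sq_nonneg ‖ξ 1‖]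
      exact norm_eq_zero.mp (pow_eq_zero_iff (by norm_num) |>.mp this)
    have hre0 : (q j j).re = s := by rw [hdiag, Complex.ofReal_re]
    have hnq : ∀ i, ‖q i j‖ ^ 2 = s * ‖ξ i‖ ^ 2 := by
      intro i
      rw [hqij i, norm_mul, mul_pow, Complex.norm_real, Real.norm_eq_abs,
        abs_of_pos hr, hr2]
    refine ⟨by rw [hqij 1, hξ1, mul_zero], ?_, ?_⟩
    · rw [hnq 0, hre0]
      have h10 : ‖ξ 1‖ ^ 2 = 0 := by rw [hξ1]; simp
      have : ‖ξ 0‖ ^ 2 = 1 / 2 := by linarith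
      rw [this]; ring
    · rw [hnq 2, hre0, hξ2]; ring

lemma eq_form (u e q : Matrix (Fin 3) (Fin 3) ℂ)
    (hu : u = Matrix.diagonal ![1, 1, -1]) (he : e = Matrix.diagonal ![1, 0, 0])
    (h1 : qᴴ = q) (h2 : q * q = q) (h3 : q * u * q = 0) (hq0 : q ≠ 0)
    (hle : ‖e - q‖ ≤ 1 / Real.sqrt 2) :
    ∃ ω : ℂ, ‖ω‖ = 1 ∧ q = qmat ω := by
  have hsym : ∀ i j, q i j = star (q j i) := fun i j => by
    rw [← congrFun (congrFun h1 i) j, Matrix.conjTranspose_apply]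
  have hD : ∀ j, q j j ≠ 0 →
      q 1 j = 0 ∧ ‖q 0 j‖ ^ 2 = (q j j).re / 2 ∧ ‖q 2 j‖ ^ 2 = (q j j).re / 2 :=
    fun j hj => (column_bound u e q hu he h1 h2 h3 j hj).2 hle
  -- the diagonal entries are real
  have hreal : ∀ j, q j j = (((q j j).re : ℝ) : ℂ) := fun j => by
    rw [diag_eq q h1 h2 j, Complex.ofReal_re]
  -- middle column vanishes
  have hq11 : q 1 1 = 0 := by
    by_contra h
    exact h (hD 1 h).1
  have hcol1 : ∀ i, q i 1 = 0 := col_zero q h1 h2 1 hq11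
  -- diagonal value forcing
  have hval : ∀ j, q j j ≠ 0 → ‖q j j‖ ^ 2 = (q j j).re / 2 → q j j = 1/2 := by
    intro j hj hsq
    set t : ℝ := (q j j).re with ht
    have hqt : q j j = (t : ℂ) := hreal j
    have hnorm : ‖q j j‖ ^ 2 = t ^ 2 := by
      rw [hqt, Complex.norm_real, Real.norm_eq_abs, sq_abs]
    have ht0 : t ≠ 0 := by
      intro h
      apply hj
      rw [hqt, h]; norm_num
    have h2t : t ^ 2 = t / 2 := by rw [← hnorm, hsq]
    have : t * (2 * t - 1) = 0 := by ring_nf; linarith [h2t]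
    rcases mul_eq_zero.mp this with h | h
    · exact absurd h ht0
    · have : t = 1/2 := by linarith
      rw [hqt, this]; norm_num
  -- q 0 0 ≠ 0
  have hq00 : q 0 0 ≠ 0 := by
    intro h00
    have hcol0 : ∀ i, q i 0 = 0 := col_zero q h1 h2 0 h00
    have hq02 : q 0 2 = 0 := by rw [hsym 0 2, hcol0 2, star_zero]
    by_cases h22 : q 2 2 = 0
    · have hcol2 : ∀ i, q i 2 = 0 := col_zero q h1 h2 2 h22
      apply hq0
      ext i j
      fin_cases j
      · exact hcol0 i
      · exact hcol1 i
      · exact hcol2 i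
    · obtain ⟨-, hn0, -⟩ := hD 2 h22
      rw [hq02, norm_zero] at hn0
      have hre2 : (q 2 2).re = 0 := by nlinarith [hn0]
      apply h22
      rw [hreal 2, hre2]
      norm_num
  obtain ⟨hq10, hn00, hn20⟩ := hD 0 hq00
  have hq00v : q 0 0 = 1/2 := hval 0 hq00 hn00
  have hre00 : (q 0 0).re = 1/2 := by rw [hq00v]; norm_num
  have hn20' : ‖q 2 0‖ ^ 2 = 1/4 := by rw [hn20, hre00]; norm_num
  have hq20ne : q 2 0 ≠ 0 := by
    intro h
    rw [h, norm_zero] at hn20'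
    norm_num at hn20'
  have hq02ne : q 0 2 ≠ 0 := by
    intro h
    apply hq20ne
    rw [hsym 2 0, h, star_zero]
  have hq22ne : q 2 2 ≠ 0 := by
    intro h22
    exact hq02ne (col_zero q h1 h2 2 h22 0)
  obtain ⟨hq12, -, hn22⟩ := hD 2 hq22ne
  have hq22v : q 2 2 = 1/2 := hval 2 hq22ne hn22
  -- define ω
  set ω : ℂ := 2 * q 0 2 with hωdef
  have hq02n : ‖q 0 2‖ = 1/2 := by
    have : ‖q 0 2‖ ^ 2 = 1/4 := by
      rw [hsym 0 2, norm_star, hn20']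
    nlinarith [norm_nonneg (q 0 2)]
  have hω : ‖ω‖ = 1 := by
    rw [hωdef, norm_mul, hq02n]
    norm_num
  refine ⟨ω, hω, ?_⟩
  have hq01 : q 0 1 = 0 := hcol1 0
  have hq21 : q 2 1 = 0 := hcol1 2
  have hq20v : q 2 0 = star ω / 2 := by
    rw [hωdef, hsym 2 0]
    simp [star_mul']
  have hq02v : q 0 2 = ω / 2 := by rw [hωdef]; ring
  ext i j
  rw [qmat]
  fin_cases i <;> fin_cases j <;>
    simp [Matrix.vecHead, Matrix.vecTail, hq00v, hq01, hq02v, hq10, hq11, hq12,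
      hq20v, hq21, hq22v] <;> ring

end Stmt14Aux

open Stmt14Aux in
/-- In ℂ³ with u = diag(1,1,−1) and e = diag(1,0,0), the distance from e
to the set of orthogonal projections q with quq = 0 equals 1/√2, and it is attained
exactly at the projections (1/2)[[1,0,ω],[0,0,0],[conj ω,0,1]] with |ω| = 1. -/
theorem stmt14 (u e : Matrix (Fin 3) (Fin 3) ℂ)
    (hu : u = Matrix.diagonal ![1, 1, -1])
    (he : e = Matrix.diagonal ![1, 0, 0]) :
    Metric.infDist e {q : Matrix (Fin 3) (Fin 3) ℂ | qᴴ = q ∧ q * q = q ∧ q * u * q = 0}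
      = 1 / Real.sqrt 2 ∧
    (∀ q : Matrix (Fin 3) (Fin 3) ℂ, qᴴ = q → q * q = q → q * u * q = 0 →
      (‖e - q‖ = 1 / Real.sqrt 2 ↔
        ∃ ω : ℂ, ‖ω‖ = 1 ∧ q = (1/2 : ℂ) • !![1, 0, ω; 0, 0, 0; star ω, 0, 1])) := by
  have hS : (qmat 1) ∈ {q : Matrix (Fin 3) (Fin 3) ℂ | qᴴ = q ∧ q * q = q ∧ q * u * q = 0} := by
    refine ⟨qmat_herm 1, qmat_idem 1 (by norm_num), ?_⟩
    rw [hu]; exact qmat_quq 1 (by norm_num)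
  have hdist1 : ‖e - qmat 1‖ = 1 / Real.sqrt 2 := by
    rw [he]; exact qmat_dist 1 (by norm_num)
  have hlb : ∀ p ∈ {q : Matrix (Fin 3) (Fin 3) ℂ | qᴴ = q ∧ q * q = q ∧ q * u * q = 0},
      1 / Real.sqrt 2 ≤ dist e p := by
    rintro p ⟨hp1, hp2, hp3⟩
    rw [dist_eq_norm]
    by_cases h0 : p = 0
    · rw [h0, sub_zero, he, norm_proj_eq_one _ e_herm e_idem e_ne_zero]
      have := one_lt_sqrt_two
      rw [div_le_one (by linarith)]
      linarith
    · obtain ⟨j, hj⟩ := exists_diag_ne p hp1 hp2 h0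
      exact (column_bound u e p hu he hp1 hp2 hp3 j hj).1
  constructor
  · refine le_antisymm ?_ ?_
    · calc Metric.infDist e _ ≤ dist e (qmat 1) := Metric.infDist_le_dist_of_mem hS
        _ = 1 / Real.sqrt 2 := by rw [dist_eq_norm, hdist1]
    · by_contra h
      push_neg at h
      obtain ⟨y, hy, hlt⟩ := (Metric.infDist_lt_iff ⟨qmat 1, hS⟩).mp h
      linarith [hlb y hy]
  · intro q hq1 hq2 hq3
    constructor
    · intro heq
      have hq0 : q ≠ 0 := by
        intro h
        rw [h, sub_zero, he, norm_proj_eq_one _ e_herm e_idem e_ne_zero] at heq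
        have h2 := one_lt_sqrt_two
        have h1' : 1 / Real.sqrt 2 < 1 := by rw [div_lt_one (by linarith)]; linarith
        linarith [heq.symm.le]
      obtain ⟨ω, hω, hqe⟩ := eq_form u e q hu he hq1 hq2 hq3 hq0 (le_of_eq heq)
      exact ⟨ω, hω, by rw [hqe]; rfl⟩
    · rintro ⟨ω, hω, rfl⟩
      rw [he]
      exact qmat_dist ω hω
end

section
/- In ℂ³ with u = diag(1,1,−1), every orthogonal projection q satisfying quq = 0 has rank at most 1; moreover q = 0 or q = q_{x,y} for some x,y with |x|²+|y|² = 1. -/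
open scoped Matrix

/-- In ℂ³ with u = diag(1,1,−1), every orthogonal projection q with quq = 0
has rank at most 1; moreover q = 0 or q = q_{x,y} for some x, y with |x|² + |y|² = 1. -/
theorem stmt15 (u q : Matrix (Fin 3) (Fin 3) ℂ)
    (hu : u = Matrix.diagonal ![1, 1, -1])
    (hq1 : qᴴ = q) (hq2 : q * q = q) (hquq : q * u * q = 0) :
    q.rank ≤ 1 ∧
    (q = 0 ∨ ∃ x y : ℂ, ‖x‖^2 + ‖y‖^2 = 1 ∧
      q = (1/2 : ℂ) • !![x * star x, x * star y, x;
                         star x * y, y * star y, y;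
                         star x, star y, 1]) := by
  subst hu
  have key : ∀ i j, q i j = 2 * q i 2 * q 2 j := by
    intro i j
    have h1 := congrFun (congrFun hquq i) j
    have h2 := congrFun (congrFun hq2 i) j
    simp [Matrix.mul_apply, Matrix.diagonal, Fin.sum_univ_three] at h1 h2
    linear_combination h1 - h2
  have hsym : ∀ i j, star (q j i) = q i j := fun i j => congrFun (congrFun hq1 i) j
  have hrank : q.rank ≤ 1 := by
    have hq : q = (Matrix.of fun i (_ : Fin 1) => 2 * q i 2) *
        (Matrix.of fun (_ : Fin 1) j => q 2 j) := by
      ext i j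
      simp [Matrix.mul_apply, key i j]
    rw [hq]
    exact le_trans (Matrix.rank_mul_le_left _ _)
      (le_trans (Matrix.rank_le_card_width _) (by simp))
  refine ⟨hrank, ?_⟩
  have hc : q 2 2 = 0 ∨ q 2 2 = 1/2 := by
    have h := key 2 2
    have h' : q 2 2 * (2 * q 2 2 - 1) = 0 := by linear_combination -h
    rcases mul_eq_zero.mp h' with h' | h'
    · exact Or.inl h'
    · right; linear_combination (1/2 : ℂ) * h'
  have hsum : (starRingEnd ℂ) (q 0 2) * q 0 2 + (starRingEnd ℂ) (q 1 2) * q 1 2 +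
      (starRingEnd ℂ) (q 2 2) * q 2 2 = q 2 2 := by
    have h2 := congrFun (congrFun hq2 2) 2
    simp [Matrix.mul_apply, Fin.sum_univ_three] at h2
    have e0 : (starRingEnd ℂ) (q 0 2) = q 2 0 := hsym 2 0
    have e1 : (starRingEnd ℂ) (q 1 2) = q 2 1 := hsym 2 1
    have e2 : (starRingEnd ℂ) (q 2 2) = q 2 2 := hsym 2 2
    linear_combination h2 + q 0 2 * e0 + q 1 2 * e1 + q 2 2 * e2
  rcases hc with hc0 | hc2
  · left
    rw [hc0] at hsum
    simp at hsum
    have hns : (Complex.normSq (q 0 2) : ℂ) + Complex.normSq (q 1 2) = 0 := by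
      linear_combination hsum - Complex.mul_conj (q 0 2) - Complex.mul_conj (q 1 2)
    have hns' : Complex.normSq (q 0 2) + Complex.normSq (q 1 2) = 0 := by exact_mod_cast hns
    have h0 := Complex.normSq_nonneg (q 0 2)
    have h1 := Complex.normSq_nonneg (q 1 2)
    have ha : q 0 2 = 0 := Complex.normSq_eq_zero.mp (by linarith)
    have hb : q 1 2 = 0 := Complex.normSq_eq_zero.mp (by linarith)
    ext i j
    rw [key i j]
    fin_cases i <;> simp [ha, hb, hc0]
  · right
    refine ⟨2 * q 0 2, 2 * q 1 2, ?_, ?_⟩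
    · have hst : (starRingEnd ℂ) (1/2 : ℂ) = 1/2 := by simp [Complex.ext_iff]
      rw [hc2] at hsum
      have hC : (‖q 0 2‖ : ℂ)^2 + (‖q 1 2‖ : ℂ)^2 = 1/4 := by
        linear_combination hsum - Complex.mul_conj' (q 0 2) - Complex.mul_conj' (q 1 2)
          - (1/2 : ℂ) * hst
      have hR : ‖q 0 2‖^2 + ‖q 1 2‖^2 = 1/4 := by
        rw [show ((1:ℂ)/4) = (((1:ℝ)/4 : ℝ) : ℂ) by norm_num] at hC
        exact_mod_cast hC
      have hn : ∀ z : ℂ, ‖2 * z‖^2 = 4 * ‖z‖^2 := by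
        intro z; rw [norm_mul]; simp; ring
      rw [hn, hn]; linarith
    · have h20 : q 2 0 = star (q 0 2) := (hsym 2 0).symm
      have h21 : q 2 1 = star (q 1 2) := (hsym 2 1).symm
      ext i j
      rw [key i j]
      fin_cases i <;> fin_cases j <;>
        simp [Matrix.smul_apply, h20, h21, hc2, star_mul'] <;> ring
end
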